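/- Let n ≥ 2 and let v be a tree representation on {1,…,n}. Then every first occurrence of a value in v appears strictly before the second occurrence of n−1; consequently, the last entry v_{2n} is the second occurrence of n, the entry v_{2n−1} is the second occurrence of n−1, and the subsequence of v formed by the second occurrences, read left to right, is exactly (1,2,…,n). -/

import Mathlib

/-- 0-indexed position of the first occurrence of `x` in `v`. -/
def firstOcc (v : List ℕ) (x : ℕ) : ℕ := v.idxOf x

/-- 0-indexed position of the second (= last, when `x` occurs exactly twice)
occurrence of `x` in `v`. -/
def secondOcc (v : List ℕ) (x : ℕ) : ℕ := v.length - 1 - v.reverse.idxOf x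

/-- `v` is a tree representation on `{1,…,n}`: it has length `2n`, entries in
`{1,…,n}`, every `i ∈ {1,…,n}` occurs exactly twice, the first entry is `1`,
for every `i ∈ {2,…,n}` the first occurrence of `i` appears strictly before the
second occurrence of `i-1`, and the second occurrence of `i` appears strictly
after the second occurrence of `i-1`. -/
def IsTreeRep (n : ℕ) (v : List ℕ) : Prop :=
  v.length = 2 * n ∧
  (∀ x ∈ v, 1 ≤ x ∧ x ≤ n) ∧
  (∀ i, 1 ≤ i → i ≤ n → v.count i = 2) ∧
  v.getD 0 0 = 1 ∧
  (∀ i, 2 ≤ i → i ≤ n → firstOcc v i < secondOcc v (i - 1)) ∧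
  (∀ i, 2 ≤ i → i ≤ n → secondOcc v (i - 1) < secondOcc v i)

/-- The subsequence of `v` formed by the entries that are second occurrences of
their value (an entry at index `j` is a second occurrence iff its value already
appears among the earlier entries `v.take j`), read left to right. -/
def secondOccsSubseq (v : List ℕ) : List ℕ :=
  ((v.zipIdx.map Prod.swap).filter fun p => (v.take p.1).contains p.2).map Prod.snd

/-! ### Auxiliary lemmas -/

theorem firstOcc_lt_length {v : List ℕ} {x : ℕ} (h : x ∈ v) : firstOcc v x < v.length :=
  List.idxOf_lt_length_iff.2 h

theorem getElem_firstOcc {v : List ℕ} {x : ℕ} (h : x ∈ v) :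
    v[firstOcc v x]'(firstOcc_lt_length h) = x :=
  List.getElem_idxOf _

theorem firstOcc_le {v : List ℕ} {x k : ℕ} (hk : k < v.length) (hvk : v[k] = x) :
    firstOcc v x ≤ k := by
  by_contra hlt
  push_neg at hlt
  have hlt' : k < List.findIdx (· == x) v := hlt
  have := List.not_of_lt_findIdx hlt'
  simp [hvk] at this

theorem secondOcc_lt_length {v : List ℕ} {x : ℕ} (h : x ∈ v) : secondOcc v x < v.length := by
  have h0 : 0 < v.length := List.length_pos_iff.2 (List.ne_nil_of_mem h)
  unfold secondOcc
  omega

theorem getElem_secondOcc {v : List ℕ} {x : ℕ} (h : x ∈ v) :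
    v[secondOcc v x]'(secondOcc_lt_length h) = x := by
  have hr : x ∈ v.reverse := List.mem_reverse.2 h
  have hri : v.reverse.idxOf x < v.reverse.length := List.idxOf_lt_length_iff.2 hr
  have h1 := List.getElem_idxOf hri
  rw [List.getElem_reverse] at h1
  simpa [secondOcc] using h1

theorem le_secondOcc {v : List ℕ} {x k : ℕ} (hk : k < v.length) (hvk : v[k] = x) :
    k ≤ secondOcc v x := by
  by_contra hlt
  push_neg at hlt
  have hx : x ∈ v := hvk ▸ List.getElem_mem hk
  have hr : x ∈ v.reverse := List.mem_reverse.2 hx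
  have hri : v.reverse.idxOf x < v.reverse.length := List.idxOf_lt_length_iff.2 hr
  rw [List.length_reverse] at hri
  unfold secondOcc at hlt
  have hj : v.length - 1 - k < List.findIdx (· == x) v.reverse := by
    show v.length - 1 - k < v.reverse.idxOf x
    omega
  have hfalse := List.not_of_lt_findIdx hj
  rw [List.getElem_reverse] at hfalse
  have heq : v.length - 1 - (v.length - 1 - k) = k := by omega
  simp only [heq] at hfalse
  simp [hvk] at hfalse

theorem two_le_count {l : List ℕ} {x i j : ℕ} (hij : i < j) (hj : j < l.length)
    (hvi : l[i]'(lt_trans hij hj) = x) (hvj : l[j] = x) : 2 ≤ l.count x := by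
  have hsplit := List.take_append_drop j l
  have hdrop : l.drop j = l[j] :: l.drop (j + 1) := List.drop_eq_getElem_cons hj
  have h1 : 1 ≤ (l.take j).count x := by
    refine List.one_le_count_iff.2 (List.mem_iff_getElem.2 ⟨i, ?_, ?_⟩)
    · simp only [List.length_take]
      omega
    · rw [List.getElem_take]
      exact hvi
  have hc : l.count x = (l.take j).count x + (l.drop j).count x := by
    conv_lhs => rw [← hsplit]
    rw [List.count_append]
  rw [hdrop, hvj, List.count_cons_self] at hc
  omega

theorem count_take_firstOcc (v : List ℕ) (x : ℕ) : (v.take (firstOcc v x)).count x = 0 := by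
  rw [List.count_eq_zero]
  intro hmem
  obtain ⟨i, hi, hvi⟩ := List.mem_iff_getElem.1 hmem
  rw [List.getElem_take] at hvi
  simp only [List.length_take] at hi
  have h1 : firstOcc v x ≤ i := firstOcc_le (by omega) hvi
  omega

theorem firstOcc_lt_secondOcc {v : List ℕ} {x : ℕ} (h2 : v.count x = 2) :
    firstOcc v x < secondOcc v x := by
  have hx : x ∈ v := List.one_le_count_iff.1 (by omega)
  have hf : firstOcc v x < v.length := firstOcc_lt_length hx
  have hvf : v[firstOcc v x] = x := getElem_firstOcc hx
  have hsplit := List.take_append_drop (firstOcc v x) v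
  have hdrop : v.drop (firstOcc v x) = v[firstOcc v x] :: v.drop (firstOcc v x + 1) :=
    List.drop_eq_getElem_cons hf
  have hc : v.count x = (v.take (firstOcc v x)).count x + (v.drop (firstOcc v x)).count x := by
    conv_lhs => rw [← hsplit]
    rw [List.count_append]
  rw [hdrop, hvf, List.count_cons_self, count_take_firstOcc] at hc
  have hmem : x ∈ v.drop (firstOcc v x + 1) := List.one_le_count_iff.1 (by omega)
  obtain ⟨i, hi, hvi⟩ := List.mem_iff_getElem.1 hmem
  rw [List.getElem_drop] at hvi
  simp only [List.length_drop] at hi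
  have := le_secondOcc (k := firstOcc v x + 1 + i) (by omega) hvi
  omega

theorem occ_eq {v : List ℕ} {x : ℕ} (h2 : v.count x = 2) {k : ℕ} (hk : k < v.length)
    (hvk : v[k] = x) : k = firstOcc v x ∨ k = secondOcc v x := by
  have hx : x ∈ v := List.one_le_count_iff.1 (by omega)
  have hf : firstOcc v x < v.length := firstOcc_lt_length hx
  have hs : secondOcc v x < v.length := secondOcc_lt_length hx
  have hvf : v[firstOcc v x] = x := getElem_firstOcc hx
  have hvs : v[secondOcc v x] = x := getElem_secondOcc hx
  by_contra hcon
  push_neg at hcon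
  have hfk : firstOcc v x < k := lt_of_le_of_ne (firstOcc_le hk hvk) (Ne.symm hcon.1)
  have hks : k < secondOcc v x := lt_of_le_of_ne (le_secondOcc hk hvk) hcon.2
  -- count ≥ 3
  have ht : 2 ≤ (v.take (secondOcc v x)).count x := by
    refine two_le_count (i := firstOcc v x) (j := k) hfk ?_ ?_ ?_
    · simp only [List.length_take]; omega
    · rw [List.getElem_take]; exact hvf
    · rw [List.getElem_take]; exact hvk
  have hdrop : v.drop (secondOcc v x) = v[secondOcc v x] :: v.drop (secondOcc v x + 1) :=
    List.drop_eq_getElem_cons hs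
  have hc : v.count x = (v.take (secondOcc v x)).count x + (v.drop (secondOcc v x)).count x := by
    conv_lhs => rw [← List.take_append_drop (secondOcc v x) v]
    rw [List.count_append]
  rw [hdrop, hvs, List.count_cons_self] at hc
  omega

theorem mem_take_iff' {v : List ℕ} {x j : ℕ} :
    x ∈ v.take j ↔ x ∈ v ∧ firstOcc v x < j := by
  constructor
  · intro h
    obtain ⟨i, hi, hvi⟩ := List.mem_iff_getElem.1 h
    rw [List.getElem_take] at hvi
    simp only [List.length_take] at hi
    have hmem : x ∈ v := hvi ▸ List.getElem_mem (by omega)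
    have := firstOcc_le (k := i) (by omega) hvi
    exact ⟨hmem, by omega⟩
  · rintro ⟨hx, hj⟩
    refine List.mem_iff_getElem.2 ⟨firstOcc v x, ?_, ?_⟩
    · simp only [List.length_take]
      exact lt_min hj (firstOcc_lt_length hx)
    · rw [List.getElem_take]
      exact getElem_firstOcc hx

theorem mem_enum_iff' {v : List ℕ} {p : ℕ × ℕ} :
    p ∈ v.zipIdx.map Prod.swap ↔ ∃ h : p.1 < v.length, v[p.1] = p.2 := by
  rw [List.mem_map]
  constructor
  · rintro ⟨q, hq, rfl⟩
    rw [List.mem_zipIdx_iff_getElem?, List.getElem?_eq_some_iff] at hq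
    exact hq
  · rintro ⟨h, hv⟩
    refine ⟨p.swap, ?_, Prod.swap_swap p⟩
    rw [List.mem_zipIdx_iff_getElem?, List.getElem?_eq_some_iff]
    exact ⟨h, hv⟩

/-- For `n ≥ 2` and a tree representation `v` on `{1,…,n}`: every first
occurrence of a value appears strictly before the second occurrence of `n−1`;
the last entry (1-indexed position `2n`) is the second occurrence of `n`; the
entry at 1-indexed position `2n−1` is the second occurrence of `n−1`; and the
subsequence of second occurrences, read left to right, is exactly `(1,2,…,n)`. -/
theorem stmt4 (n : ℕ) (hn : 2 ≤ n) (v : List ℕ) (hv : IsTreeRep n v) :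
    (∀ x, 1 ≤ x → x ≤ n → firstOcc v x < secondOcc v (n - 1)) ∧
    (v.getD (2 * n - 1) 0 = n ∧ secondOcc v n = 2 * n - 1) ∧
    (v.getD (2 * n - 2) 0 = n - 1 ∧ secondOcc v (n - 1) = 2 * n - 2) ∧
    secondOccsSubseq v = List.range' 1 n := by
  obtain ⟨hlen, hmem, hcount, hfirst, h5, h6⟩ := hv
  have memk : ∀ i, 1 ≤ i → i ≤ n → i ∈ v := fun i h1 h2 =>
    List.one_le_count_iff.1 (by rw [hcount i h1 h2]; omega)
  have smono : ∀ b, b ≤ n → ∀ a, 1 ≤ a → a < b → secondOcc v a < secondOcc v b := by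
    intro b
    induction b with
    | zero => intro _ a _ h; omega
    | succ b ih =>
      intro hb a ha hab
      have hstep : secondOcc v b < secondOcc v (b + 1) := by
        have := h6 (b + 1) (by omega) hb
        simpa using this
      rcases eq_or_lt_of_le (Nat.lt_succ_iff.1 hab) with rfl | h
      · exact hstep
      · exact lt_trans (ih (by omega) a ha h) hstep
  -- Part 1
  have part1 : ∀ x, 1 ≤ x → x ≤ n → firstOcc v x < secondOcc v (n - 1) := by
    intro x h1 h2
    rcases eq_or_lt_of_le h2 with rfl | hxlt
    · have := h5 x (by omega) le_rfl
      exact this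
    · have hx2 : x ≤ n - 1 := by omega
      have hfs : firstOcc v x < secondOcc v x := firstOcc_lt_secondOcc (hcount x h1 h2)
      rcases eq_or_lt_of_le hx2 with rfl | hlt
      · exact hfs
      · exact lt_trans hfs (smono (n - 1) (by omega) x h1 hlt)
  -- Part 2
  have hL : v.length = 2 * n := hlen
  have hk1 : 2 * n - 1 < v.length := by omega
  obtain ⟨x, hxdef⟩ : ∃ x, v[2 * n - 1]'hk1 = x := ⟨_, rfl⟩
  have hxv : x ∈ v := hxdef ▸ List.getElem_mem hk1
  obtain ⟨hx1, hxn⟩ := hmem x hxv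
  have hsx : secondOcc v x = 2 * n - 1 := by
    have h1 := le_secondOcc hk1 hxdef
    have h2 := secondOcc_lt_length hxv
    omega
  have hsn_le : secondOcc v n < v.length := secondOcc_lt_length (memk n (by omega) le_rfl)
  have hxeq : x = n := by
    by_contra hne
    have : secondOcc v x < secondOcc v n := smono n le_rfl x hx1 (by omega)
    omega
  have hsn : secondOcc v n = 2 * n - 1 := hxeq ▸ hsx
  have part2a : v.getD (2 * n - 1) 0 = n := by
    rw [List.getD_eq_getElem v 0 hk1, hxdef]
    exact hxeq
  -- Part 3
  have hk2 : 2 * n - 2 < v.length := by omega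
  obtain ⟨y, hydef⟩ : ∃ y, v[2 * n - 2]'hk2 = y := ⟨_, rfl⟩
  have hyv : y ∈ v := hydef ▸ List.getElem_mem hk2
  obtain ⟨hy1, hyn⟩ := hmem y hyv
  have hsy_ge : 2 * n - 2 ≤ secondOcc v y := le_secondOcc hk2 hydef
  have hsy_lt : secondOcc v y < v.length := secondOcc_lt_length hyv
  have hsn1_lt : secondOcc v (n - 1) < secondOcc v n := by
    have := h6 n (by omega) le_rfl
    exact this
  have hsy : secondOcc v y = 2 * n - 2 := by
    rcases Nat.lt_or_ge (secondOcc v y) (2 * n - 1) with h | h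
    · omega
    · -- secondOcc v y = 2n - 1 = secondOcc v n, so y = n
      exfalso
      have hsy' : secondOcc v y = 2 * n - 1 := by omega
      have hvy : v[secondOcc v y]'hsy_lt = y := getElem_secondOcc hyv
      have hyn' : y = n := by
        simp only [hsy'] at hvy
        rw [hxdef] at hvy
        omega
      -- then 2n-2 is the first occurrence of n
      have hocc := occ_eq (hcount y hy1 hyn) hk2 hydef
      rcases hocc with h' | h'
      · -- firstOcc v n = 2n - 2, but firstOcc v n < secondOcc v (n-1) < 2n - 1
        have hlt := h5 n (by omega) le_rfl
        rw [hyn'] at h'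
        omega
      · omega
  have hyne : y ≠ n := by
    intro h
    rw [h] at hsy
    omega
  have hyeq : y = n - 1 := by
    by_contra hne
    have hylt : y < n - 1 := by omega
    have : secondOcc v y < secondOcc v (n - 1) := smono (n - 1) (by omega) y hy1 hylt
    omega
  have hsn1 : secondOcc v (n - 1) = 2 * n - 2 := hyeq ▸ hsy
  have part3a : v.getD (2 * n - 2) 0 = n - 1 := by
    rw [List.getD_eq_getElem v 0 hk2, hydef]
    exact hyeq
  -- Part 4
  have part4 : secondOccsSubseq v = List.range' 1 n := by
    have charF : ∀ p : ℕ × ℕ,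
        p ∈ (v.zipIdx.map Prod.swap).filter (fun p => (v.take p.1).contains p.2) ↔
          1 ≤ p.2 ∧ p.2 ≤ n ∧ p.1 = secondOcc v p.2 := by
      rintro ⟨j, z⟩
      rw [List.mem_filter, mem_enum_iff']
      dsimp only
      constructor
      · rintro ⟨⟨h1, h2⟩, hP⟩
        have hcont : z ∈ v.take j := by
          simpa using hP
        rw [mem_take_iff'] at hcont
        have hzmem := hmem z (h2 ▸ List.getElem_mem h1)
        have hocc := occ_eq (hcount z hzmem.1 hzmem.2) h1 h2
        rcases hocc with h | h
        · exact absurd h (by omega)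
        · exact ⟨hzmem.1, hzmem.2, h⟩
      · rintro ⟨h1, h2, rfl⟩
        have hzv : z ∈ v := memk z h1 h2
        have hlt := secondOcc_lt_length hzv
        have hfs := firstOcc_lt_secondOcc (hcount z h1 h2)
        refine ⟨⟨hlt, getElem_secondOcc hzv⟩, ?_⟩
        have : z ∈ v.take (secondOcc v z) := mem_take_iff'.2 ⟨hzv, hfs⟩
        simpa using this
    have charR : ∀ p : ℕ × ℕ,
        p ∈ (List.range' 1 n).map (fun i => (secondOcc v i, i)) ↔
          1 ≤ p.2 ∧ p.2 ≤ n ∧ p.1 = secondOcc v p.2 := by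
      rintro ⟨j, z⟩
      rw [List.mem_map]
      dsimp only
      constructor
      · rintro ⟨i, hi, heq⟩
        rw [List.mem_range'_1] at hi
        obtain ⟨rfl, rfl⟩ : secondOcc v i = j ∧ i = z := by
          simpa [Prod.ext_iff] using heq
        exact ⟨hi.1, by omega, rfl⟩
      · rintro ⟨h1, h2, rfl⟩
        exact ⟨z, List.mem_range'_1.2 ⟨h1, by omega⟩, rfl⟩
    have sortedF : List.Pairwise (fun p q : ℕ × ℕ => p.1 < q.1)
        ((v.zipIdx.map Prod.swap).filter (fun p => (v.take p.1).contains p.2)) := by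
      refine List.Pairwise.sublist List.filter_sublist ?_
      rw [List.pairwise_iff_getElem]
      intro i j hi hj hij
      simp only [List.getElem_map, List.getElem_zipIdx, Prod.fst_swap]
      omega
    have lenR : ((List.range' 1 n).map (fun i => (secondOcc v i, i))).length = n := by
      simp
    have sortedR : List.Pairwise (fun p q : ℕ × ℕ => p.1 < q.1)
        ((List.range' 1 n).map (fun i => (secondOcc v i, i))) := by
      rw [List.pairwise_iff_getElem]
      intro i j hi hj hij
      rw [lenR] at hi hj
      simp only [List.getElem_map, List.getElem_range']
      exact smono (1 + 1 * j) (by omega) (1 + 1 * i) (by omega) (by omega)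
    have ndF : ((v.zipIdx.map Prod.swap).filter (fun p => (v.take p.1).contains p.2)).Nodup :=
      List.Pairwise.imp (fun h heq => by rw [heq] at h; exact lt_irrefl _ h) sortedF
    have ndR : ((List.range' 1 n).map (fun i => (secondOcc v i, i))).Nodup :=
      List.Pairwise.imp (fun h heq => by rw [heq] at h; exact lt_irrefl _ h) sortedR
    have hperm := (List.perm_ext_iff_of_nodup ndF ndR).2 (fun a => by rw [charF, charR])
    haveI : IsAntisymm (ℕ × ℕ) (fun p q => p.1 < q.1) :=
      ⟨fun a b h1 h2 => absurd h2 (by omega)⟩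
    have hFR := List.Perm.eq_of_pairwise (fun a b _ _ h1 h2 => absurd h2 (by omega)) sortedF sortedR hperm
    unfold secondOccsSubseq
    rw [hFR, List.map_map]
    simp [Function.comp_def]
  exact ⟨part1, ⟨part2a, hsn⟩, ⟨part3a, hsn1⟩, part4⟩
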